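/- Let B : [0,1] → ℝ be continuous with B_0 = 0 and let x_0 > 0. Any two continuous functions X, Y : [0,1] → ℝ with X_0 = Y_0 = x_0 that remain strictly positive and satisfy Z_t = x_0 + ∫_0^t 1/Z_s ds + B_t for all t ∈ [0,1] (Z ∈ {X, Y}) are equal. Moreover, such a strictly positive solution, if it exists, satisfies X_t ≥ x_0 + B_t for all t. -/
import Mathlib


open Set

/-- Path-by-path uniqueness for the Bessel-type equation
`Z t = x₀ + ∫₀ᵗ 1/Zₛ ds + B t` among strictly positive continuous solutions,
together with the lower bound `X t ≥ x₀ + B t`. -/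
theorem stmt11 (B : ℝ → ℝ) (hB : ContinuousOn B (Icc 0 1)) (hB0 : B 0 = 0)
    (x₀ : ℝ) (hx₀ : 0 < x₀) (X Y : ℝ → ℝ)
    (hXc : ContinuousOn X (Icc 0 1)) (hYc : ContinuousOn Y (Icc 0 1))
    (hX0 : X 0 = x₀) (hY0 : Y 0 = x₀)
    (hXpos : ∀ t ∈ Icc (0:ℝ) 1, 0 < X t)
    (hYpos : ∀ t ∈ Icc (0:ℝ) 1, 0 < Y t)
    (hXeq : ∀ t ∈ Icc (0:ℝ) 1, X t = x₀ + (∫ s in (0:ℝ)..t, 1 / X s) + B t)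
    (hYeq : ∀ t ∈ Icc (0:ℝ) 1, Y t = x₀ + (∫ s in (0:ℝ)..t, 1 / Y s) + B t) :
    (∀ t ∈ Icc (0:ℝ) 1, X t = Y t) ∧
    (∀ t ∈ Icc (0:ℝ) 1, x₀ + B t ≤ X t) := by
  have hXinv : ContinuousOn (fun s => 1 / X s) (Icc 0 1) :=
    continuousOn_const.div hXc (fun s hs => (hXpos s hs).ne')
  have hYinv : ContinuousOn (fun s => 1 / Y s) (Icc 0 1) :=
    continuousOn_const.div hYc (fun s hs => (hYpos s hs).ne')
  have hsub : ∀ t ∈ Icc (0:ℝ) 1, uIcc (0:ℝ) t ⊆ Icc 0 1 := by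
    intro t ht
    rw [uIcc_of_le ht.1]
    exact Icc_subset_Icc le_rfl ht.2
  set f : ℝ → ℝ := fun s => 1 / X s - 1 / Y s with hf_def
  have hfc : ContinuousOn f (Icc 0 1) := hXinv.sub hYinv
  have hXint : ∀ t ∈ Icc (0:ℝ) 1, IntervalIntegrable (fun s => 1 / X s) MeasureTheory.volume 0 t :=
    fun t ht => (hXinv.mono (hsub t ht)).intervalIntegrable
  have hYint : ∀ t ∈ Icc (0:ℝ) 1, IntervalIntegrable (fun s => 1 / Y s) MeasureTheory.volume 0 t :=
    fun t ht => (hYinv.mono (hsub t ht)).intervalIntegrable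
  -- the primitive F
  set F : ℝ → ℝ := fun t => ∫ s in (0:ℝ)..t, f s with hF_def
  have hFeq : ∀ t ∈ Icc (0:ℝ) 1, F t = X t - Y t := by
    intro t ht
    have := intervalIntegral.integral_sub (hXint t ht) (hYint t ht)
    simp only [hF_def, hf_def]
    rw [this, hXeq t ht, hYeq t ht]
    ring
  have hFc : ContinuousOn F (Icc 0 1) :=
    (hXc.sub hYc).congr hFeq
  -- derivative of F on the interior
  have hFd : ∀ t ∈ Ioo (0:ℝ) 1, HasDerivAt F (f t) t := by
    intro t ht
    have htI : t ∈ Icc (0:ℝ) 1 := Ioo_subset_Icc_self ht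
    have hmem : Icc (0:ℝ) 1 ∈ nhds t := Icc_mem_nhds ht.1 ht.2
    have hct : ContinuousAt f t := hfc.continuousAt hmem
    exact intervalIntegral.integral_hasDerivAt_right
      ((hfc.mono (hsub t htI)).intervalIntegrable)
      ((hfc.mono Ioo_subset_Icc_self).stronglyMeasurableAtFilter isOpen_Ioo t ht) hct
  -- g = F^2 is antitone
  set g : ℝ → ℝ := fun t => (F t) ^ 2 with hg_def
  have hgc : ContinuousOn g (Icc 0 1) := hFc.pow 2
  have hsign : ∀ t ∈ Icc (0:ℝ) 1, F t * f t ≤ 0 := by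
    intro t ht
    have hx := hXpos t ht
    have hy := hYpos t ht
    rw [hFeq t ht, hf_def]
    have : (X t - Y t) * (1 / X t - 1 / Y t) = -((X t - Y t) ^ 2 / (X t * Y t)) := by
      field_simp
      ring
    rw [this]
    have : 0 ≤ (X t - Y t) ^ 2 / (X t * Y t) :=
      div_nonneg (sq_nonneg _) (mul_pos hx hy).le
    linarith
  have hanti : AntitoneOn g (Icc 0 1) := by
    apply antitoneOn_of_deriv_nonpos (convex_Icc 0 1) hgc
    · intro t ht
      rw [interior_Icc] at ht
      exact (((hFd t ht).pow 2).differentiableAt).differentiableWithinAt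
    · intro t ht
      rw [interior_Icc] at ht
      have hd : HasDerivAt g (2 * F t ^ (2 - 1) * f t) t := (hFd t ht).pow 2
      rw [hd.deriv]
      have := hsign t (Ioo_subset_Icc_self ht)
      norm_num
      nlinarith
  have hzero : ∀ t ∈ Icc (0:ℝ) 1, X t = Y t := by
    intro t ht
    have h0 : (0:ℝ) ∈ Icc (0:ℝ) 1 := ⟨le_rfl, zero_le_one⟩
    have hgt : g t ≤ g 0 := hanti h0 ht ht.1
    have hg0 : g 0 = 0 := by
      simp [hg_def, hF_def]
    have hge : 0 ≤ g t := sq_nonneg _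
    have : F t = 0 := by
      have : g t = 0 := le_antisymm (hg0 ▸ hgt) hge
      exact pow_eq_zero_iff (two_ne_zero) |>.mp this
    have := hFeq t ht ▸ this
    linarith
  refine ⟨hzero, fun t ht => ?_⟩
  rw [hXeq t ht]
  have hnn : 0 ≤ ∫ s in (0:ℝ)..t, 1 / X s := by
    apply intervalIntegral.integral_nonneg ht.1
    intro s hs
    exact le_of_lt (by have := hXpos s ⟨hs.1, hs.2.trans ht.2⟩; positivity)
  linarith
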